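/- (Trailing Lemma, combinatorial form) Suppose w ∈ V is a trailing node at time t, i.e., there exist v ∈ V and s ∈ ℕ with Ξ_v^s(t) = L_v(t) − L_w(t) − (2s+1)κ·d(v,w) > 0. Then w satisfies the fast condition at time t; in fact, with the same s, some neighbor x of w has L_x(t) − L_w(t) ≥ (2s+1)κ and every neighbor y of w has L_w(t) − L_y(t) ≤ (2s+1)κ. -/

import Mathlib

open Finset

variable {V : Type*}

/-- Node `v` satisfies the *fast condition* at time `t`. -/
def fastCond (G : SimpleGraph V) (L : V → ℝ → ℝ) (κ : ℝ) (v : V) (t : ℝ) : Prop :=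
  ∃ s : ℕ, (∃ x, G.Adj v x ∧ (2 * (s : ℝ) + 1) * κ ≤ L x t - L v t) ∧
    ∀ y, G.Adj v y → L v t - L y t ≤ (2 * (s : ℝ) + 1) * κ

/-- Node `v` satisfies the *slow condition* at time `t`. -/
def slowCond (G : SimpleGraph V) (L : V → ℝ → ℝ) (κ : ℝ) (v : V) (t : ℝ) : Prop :=
  ∃ s : ℕ, (∃ x, G.Adj v x ∧ 2 * (s : ℝ) * κ ≤ L v t - L x t) ∧
    ∀ y, G.Adj v y → L y t - L v t ≤ 2 * (s : ℝ) * κ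

/-- `Ψ_v^s(t) = max_{w ∈ V} (L_w(t) - L_v(t) - 2sκ·d(v,w))`. -/
noncomputable def Psi [Fintype V] [Nonempty V] (G : SimpleGraph V) (L : V → ℝ → ℝ)
    (κ : ℝ) (s : ℕ) (v : V) (t : ℝ) : ℝ :=
  univ.sup' univ_nonempty fun w => L w t - L v t - 2 * (s : ℝ) * κ * (G.dist v w)

/-- `Ψ^s(t) = max_{v ∈ V} Ψ_v^s(t)`. -/
noncomputable def PsiMax [Fintype V] [Nonempty V] (G : SimpleGraph V) (L : V → ℝ → ℝ)
    (κ : ℝ) (s : ℕ) (t : ℝ) : ℝ :=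
  univ.sup' univ_nonempty fun v => Psi G L κ s v t

/-- `Ξ_v^s(t) = max_{w ∈ V} (L_v(t) - L_w(t) - (2s+1)κ·d(v,w))`. -/
noncomputable def Xi [Fintype V] [Nonempty V] (G : SimpleGraph V) (L : V → ℝ → ℝ)
    (κ : ℝ) (s : ℕ) (v : V) (t : ℝ) : ℝ :=
  univ.sup' univ_nonempty fun w => L v t - L w t - (2 * (s : ℝ) + 1) * κ * (G.dist v w)

/-- The global skew `𝒢(t) = max_{v,w ∈ V} |L_v(t) - L_w(t)|`. -/
noncomputable def GSkew [Fintype V] [Nonempty V] (L : V → ℝ → ℝ) (t : ℝ) : ℝ :=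
  univ.sup' univ_nonempty fun p : V × V => |L p.1 t - L p.2 t|

/-- Trailing Lemma, combinatorial form: a trailing node satisfies the
fast condition, in fact with the same `s`. -/
theorem stmt_4 [Fintype V] [Nonempty V] (G : SimpleGraph V) (hconn : G.Connected)
    (L : V → ℝ → ℝ) (κ : ℝ) (hκ : 0 < κ) (t : ℝ) (w v : V) (s : ℕ)
    (htrail : Xi G L κ s v t = L v t - L w t - (2 * (s : ℝ) + 1) * κ * (G.dist v w))
    (hpos : 0 < L v t - L w t - (2 * (s : ℝ) + 1) * κ * (G.dist v w)) :
    fastCond G L κ w t ∧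
      (∃ x, G.Adj w x ∧ (2 * (s : ℝ) + 1) * κ ≤ L x t - L w t) ∧
      (∀ y, G.Adj w y → L w t - L y t ≤ (2 * (s : ℝ) + 1) * κ) := by
  classical
  have hmax : ∀ u : V, L v t - L u t - (2 * (s : ℝ) + 1) * κ * (G.dist v u)
      ≤ L v t - L w t - (2 * (s : ℝ) + 1) * κ * (G.dist v w) := by
    intro u
    rw [← htrail]
    exact le_sup' (fun u => L v t - L u t - (2 * (s : ℝ) + 1) * κ * (G.dist v u)) (mem_univ u)
  have hc0 : 0 < (2 * (s : ℝ) + 1) * κ := by positivity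
  have hvw : v ≠ w := by
    rintro rfl
    simp [SimpleGraph.dist_self] at hpos
  have hreach : G.Reachable v w := hconn v w
  obtain ⟨p, hp⟩ := hreach.exists_walk_length_eq_dist
  have hd1 : 1 ≤ G.dist v w := by
    have : G.dist v w ≠ 0 := by
      intro h
      exact hvw ((hconn.dist_eq_zero_iff).mp h)
    omega
  -- take the last edge of p (first edge of p.reverse)
  have hq : (p.reverse).length = G.dist v w := by simp [hp]
  have key : ∃ x, G.Adj w x ∧ (2 * (s : ℝ) + 1) * κ ≤ L x t - L w t := by
    cases hpr : p.reverse with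
    | nil => rw [hpr] at hq; simp at hq; exact absurd rfl hvw
    | @cons _ x _ h q =>
      refine ⟨x, h, ?_⟩
      have hlq : q.length = G.dist v w - 1 := by
        rw [hpr] at hq; simp at hq; omega
      have hdx : G.dist v x ≤ G.dist v w - 1 := by
        have := SimpleGraph.dist_le q.reverse
        simpa [hlq] using this
      have hdx' : (G.dist v x : ℝ) ≤ (G.dist v w : ℝ) - 1 := by
        have : (G.dist v x : ℝ) ≤ ((G.dist v w - 1 : ℕ) : ℝ) := by exact_mod_cast hdx
        rw [Nat.cast_sub hd1] at this
        simpa using this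
      have := hmax x
      nlinarith [hc0, hdx']
  refine ⟨⟨s, key, ?_⟩, key, ?_⟩ <;> intro y hy <;>
  · have hdy : G.dist w y = 1 := SimpleGraph.dist_eq_one_iff_adj.mpr hy
    have htri : G.dist v y ≤ G.dist v w + G.dist w y := hconn.dist_triangle
    have hdy' : (G.dist v y : ℝ) ≤ (G.dist v w : ℝ) + 1 := by
      rw [hdy] at htri; exact_mod_cast htri
    have := hmax y
    nlinarith [hc0, hdy']
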